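/- Define n : (0,1) × ℝ → ℝ by n(ρ,x) := −(3 sin(4 arctan(ρ/√2) + 2ρx) − 6ρx)/(2ρ³) + 3 sin(4 arctan(ρ/√2))/(2ρ³) − 48x/(ρ²+2)². Then there exists a constant C > 0 such that for all ρ ∈ (0,1) and all x ∈ ℝ: |n(ρ,x)| ≤ C(x² + |x|³), |∂_x n(ρ,x)| ≤ C(|x| + x²), |∂_ρ n(ρ,x)| ≤ C(x² + x⁴), |∂_x ∂_ρ n(ρ,x)| ≤ C(|x| + |x|³), and |∂_x² n(ρ,x)| ≤ C(1 + |x|). -/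

import Mathlib

noncomputable section

/-- The nonlinearity of the corotational wave maps equation in similarity coordinates,
linearized around the blowup profile:
`n(ρ,x) = −(3 sin(4 arctan(ρ/√2) + 2ρx) − 6ρx)/(2ρ³) + 3 sin(4 arctan(ρ/√2))/(2ρ³)
          − 48x/(ρ²+2)²`. -/
def nlin (ρ x : ℝ) : ℝ :=
  -(3 * Real.sin (4 * Real.arctan (ρ / Real.sqrt 2) + 2 * ρ * x) - 6 * ρ * x) / (2 * ρ ^ 3)
    + 3 * Real.sin (4 * Real.arctan (ρ / Real.sqrt 2)) / (2 * ρ ^ 3)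
    - 48 * x / (ρ ^ 2 + 2) ^ 2

namespace NLaux

/-! ### Global Taylor-type bounds for sine and cosine -/

lemma nonneg_of_hasDerivAt {f f' : ℝ → ℝ} (hf : ∀ t, HasDerivAt f (f' t) t)
    (h0 : f 0 = 0) (hd : ∀ t, 0 ≤ t → 0 ≤ f' t) {t : ℝ} (ht : 0 ≤ t) : 0 ≤ f t := by
  have hdiff : Differentiable ℝ f := fun x => (hf x).differentiableAt
  have hmono : MonotoneOn f (Set.Ici 0) := by
    apply monotoneOn_of_deriv_nonneg (convex_Ici 0) hdiff.continuous.continuousOn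
      hdiff.differentiableOn
    intro x hx
    rw [(hf x).deriv]
    exact hd x (le_of_lt (by simpa [interior_Ici] using hx))
  calc (0:ℝ) = f 0 := h0.symm
  _ ≤ f t := hmono (Set.self_mem_Ici) (Set.mem_Ici.2 ht) ht

lemma sin_ge_cube (t : ℝ) (ht : 0 ≤ t) : t - t^3/6 ≤ Real.sin t := by
  have := nonneg_of_hasDerivAt (f := fun t => Real.sin t - t + t^3/6)
    (f' := fun t => Real.cos t - 1 + t^2/2)
    (fun t => by
      have h1 : HasDerivAt (fun t : ℝ => Real.sin t) (Real.cos t) t := Real.hasDerivAt_sin t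
      have h2 : HasDerivAt (fun t : ℝ => t^3/6) (t^2/2) t := by
        have := (hasDerivAt_pow 3 t).div_const 6
        refine this.congr_deriv ?_; push_cast; ring
      exact (h1.sub (hasDerivAt_id t)).add h2)
    (by norm_num)
    (fun t _ => by nlinarith [Real.one_sub_sq_div_two_le_cos (x := t)]) ht
  linarith

lemma cos_le_quartic (t : ℝ) (ht : 0 ≤ t) : Real.cos t ≤ 1 - t^2/2 + t^4/24 := by
  have := nonneg_of_hasDerivAt (f := fun t => 1 - t^2/2 + t^4/24 - Real.cos t)
    (f' := fun t => -t + t^3/6 + Real.sin t)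
    (fun t => by
      have h2 : HasDerivAt (fun t : ℝ => t^2/2) (t) t := by
        have := (hasDerivAt_pow 2 t).div_const 2
        refine this.congr_deriv ?_; push_cast; ring
      have h4 : HasDerivAt (fun t : ℝ => t^4/24) (t^3/6) t := by
        have := (hasDerivAt_pow 4 t).div_const 24
        refine this.congr_deriv ?_; push_cast; ring
      have := (((hasDerivAt_const t (1:ℝ)).sub h2).add h4).sub (Real.hasDerivAt_cos t)
      refine this.congr_deriv ?_; ring)
    (by norm_num)
    (fun t ht => by nlinarith [sin_ge_cube t ht]) ht
  linarith

lemma sin_le_quintic (t : ℝ) (ht : 0 ≤ t) : Real.sin t ≤ t - t^3/6 + t^5/120 := by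
  have := nonneg_of_hasDerivAt (f := fun t => t - t^3/6 + t^5/120 - Real.sin t)
    (f' := fun t => 1 - t^2/2 + t^4/24 - Real.cos t)
    (fun t => by
      have h3 : HasDerivAt (fun t : ℝ => t^3/6) (t^2/2) t := by
        have := (hasDerivAt_pow 3 t).div_const 6
        refine this.congr_deriv ?_; push_cast; ring
      have h5 : HasDerivAt (fun t : ℝ => t^5/120) (t^4/24) t := by
        have := (hasDerivAt_pow 5 t).div_const 120
        refine this.congr_deriv ?_; push_cast; ring
      have := (((hasDerivAt_id t).sub h3).add h5).sub (Real.hasDerivAt_sin t)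
      exact this)
    (by norm_num)
    (fun t ht => by nlinarith [cos_le_quartic t ht]) ht
  linarith

lemma abs_cos_sub_one (t : ℝ) : |Real.cos t - 1| ≤ t^2/2 := by
  rw [abs_le]
  constructor
  · nlinarith [Real.one_sub_sq_div_two_le_cos (x := t)]
  · nlinarith [Real.cos_le_one t, sq_nonneg t]

lemma abs_sin_sub_le (t : ℝ) : |Real.sin t - t| ≤ |t|^3/6 := by
  rcases le_or_gt 0 t with ht | ht
  · rw [abs_of_nonneg ht, abs_le]
    constructor
    · nlinarith [sin_ge_cube t ht]
    · nlinarith [Real.sin_le ht, pow_nonneg ht 3]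
  · have ht' : 0 ≤ -t := by linarith
    have := sin_ge_cube (-t) ht'
    have h2 := Real.sin_le ht'
    rw [Real.sin_neg] at this h2
    rw [abs_of_neg ht, abs_le]
    constructor <;> nlinarith

lemma abs_cos_taylor4 (t : ℝ) : |Real.cos t - 1 + t^2/2| ≤ t^4/24 := by
  rw [abs_le]
  constructor
  · nlinarith [Real.one_sub_sq_div_two_le_cos (x := t), pow_nonneg (sq_nonneg t) 2]
  · have h := cos_le_quartic |t| (abs_nonneg t)
    rw [Real.cos_abs] at h
    rw [show |t|^2 = t^2 from sq_abs t] at h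
    rw [show |t|^4 = t^4 by rw [show (4:ℕ) = 2*2 from rfl, pow_mul, pow_mul, sq_abs]] at h
    linarith

lemma abs_sin_taylor5 (t : ℝ) : |Real.sin t - t + t^3/6| ≤ |t|^5/120 := by
  rcases le_or_gt 0 t with ht | ht
  · rw [abs_of_nonneg ht, abs_le]
    constructor
    · nlinarith [sin_ge_cube t ht, pow_nonneg ht 5]
    · nlinarith [sin_le_quintic t ht]
  · have ht' : 0 ≤ -t := by linarith
    have h1 := sin_ge_cube (-t) ht'
    have h2 := sin_le_quintic (-t) ht'
    rw [Real.sin_neg] at h1 h2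
    rw [abs_of_neg ht, abs_le]
    constructor <;> nlinarith

lemma key1 (u : ℝ) : |u*Real.sin u + 2*Real.cos u - 2| ≤ u^4/4 := by
  have h1 := abs_sin_sub_le u
  have h2 := abs_cos_taylor4 u
  have e : u*Real.sin u + 2*Real.cos u - 2
      = u*(Real.sin u - u) + 2*(Real.cos u - 1 + u^2/2) := by ring
  rw [e]
  have h4 : |u| * (|u| ^ 3 / 6) = u^4/6 := by
    rw [show |u| * (|u|^3/6) = |u|^4/6 by ring,
        show |u|^4 = u^4 by rw [show (4:ℕ) = 2*2 from rfl, pow_mul, pow_mul, sq_abs]]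
  calc |u*(Real.sin u - u) + 2*(Real.cos u - 1 + u^2/2)|
      ≤ |u*(Real.sin u - u)| + |2*(Real.cos u - 1 + u^2/2)| := abs_add_le _ _
  _ = |u| *|Real.sin u - u| + 2*|Real.cos u - 1 + u^2/2| := by
      rw [abs_mul, abs_mul]; norm_num
  _ ≤ |u| *(|u|^3/6) + 2*(u^4/24) :=
      add_le_add (mul_le_mul_of_nonneg_left h1 (abs_nonneg u)) (by linarith)
  _ ≤ u^4/4 := by rw [h4]; linarith
  
lemma key2 (u : ℝ) : |u*(Real.cos u - 1) - 3*(Real.sin u - u)| ≤ |u|^5/15 := by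
  have h1 := abs_sin_taylor5 u
  have h2 := abs_cos_taylor4 u
  have e : u*(Real.cos u - 1) - 3*(Real.sin u - u)
      = u*(Real.cos u - 1 + u^2/2) - 3*(Real.sin u - u + u^3/6) := by ring
  rw [e]
  have h4 : |u| * (u ^ 4 / 24) = |u|^5/24 := by
    rw [show |u|^5 = |u| * |u|^4 by ring,
        show |u|^4 = u^4 by rw [show (4:ℕ) = 2*2 from rfl, pow_mul, pow_mul, sq_abs]]
    ring
  calc |u*(Real.cos u - 1 + u^2/2) - 3*(Real.sin u - u + u^3/6)|
      ≤ |u*(Real.cos u - 1 + u^2/2)| + |3*(Real.sin u - u + u^3/6)| := abs_sub _ _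
  _ = |u| *|Real.cos u - 1 + u^2/2| + 3*|Real.sin u - u + u^3/6| := by
      rw [abs_mul, abs_mul]; norm_num
  _ ≤ |u| *(u^4/24) + 3*(|u|^5/120) := by gcongr
  _ = |u|^5/24 + |u|^5/40 := by rw [h4]; ring
  _ = |u|^5/15 := by ring

lemma key3 (u : ℝ) : |u*Real.cos u - Real.sin u| ≤ 2*|u|^3/3 := by
  have h1 := abs_sin_sub_le u
  have h2 := abs_cos_sub_one u
  have e : u*Real.cos u - Real.sin u = u*(Real.cos u - 1) - (Real.sin u - u) := by ring
  rw [e]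
  have h4 : |u| * (u ^ 2 / 2) = |u|^3/2 := by
    rw [show |u|^3 = |u| * |u|^2 by ring, sq_abs]; ring
  calc |u*(Real.cos u - 1) - (Real.sin u - u)|
      ≤ |u*(Real.cos u - 1)| + |Real.sin u - u| := abs_sub _ _
  _ = |u| *|Real.cos u - 1| + |Real.sin u - u| := by rw [abs_mul]
  _ ≤ |u| *(u^2/2) + |u|^3/6 := by gcongr
  _ = 2*|u|^3/3 := by rw [h4]; ring

lemma arctan_le_self (t : ℝ) (ht : 0 ≤ t) : Real.arctan t ≤ t := by
  calc Real.arctan t ≤ Real.tan (Real.arctan t) :=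
        Real.le_tan (by rw [← Real.arctan_zero]; exact Real.arctan_strictMono.monotone ht)
          (Real.arctan_lt_pi_div_two t)
  _ = t := Real.tan_arctan t

/-! ### Closed form of the nonlinearity -/

lemma sin_two_arctan (u : ℝ) : Real.sin (2 * Real.arctan u) = 2*u/(1+u^2) := by
  rw [Real.sin_two_mul, Real.sin_arctan, Real.cos_arctan]
  have h : Real.sqrt (1+u^2) ^ 2 = 1 + u^2 := Real.sq_sqrt (by positivity)
  have h0 : Real.sqrt (1+u^2) ≠ 0 := by positivity
  field_simp
  rw [h]

lemma cos_two_arctan (u : ℝ) : Real.cos (2 * Real.arctan u) = (1-u^2)/(1+u^2) := by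
  rw [Real.cos_two_mul, Real.cos_arctan]
  have h : Real.sqrt (1+u^2) ^ 2 = 1 + u^2 := Real.sq_sqrt (by positivity)
  have h0 : Real.sqrt (1+u^2) ≠ 0 := by positivity
  have h1 : (0:ℝ) < 1 + u^2 := by positivity
  field_simp
  nlinarith [h]

lemma sinA_eq (ρ : ℝ) : Real.sin (4 * Real.arctan (ρ / Real.sqrt 2))
    = 4*Real.sqrt 2*ρ*(2-ρ^2)/(ρ^2+2)^2 := by
  have h4 : 4 * Real.arctan (ρ / Real.sqrt 2) = 2 * (2 * Real.arctan (ρ / Real.sqrt 2)) := by ring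
  rw [h4, Real.sin_two_mul, sin_two_arctan, cos_two_arctan]
  have h2 : Real.sqrt 2 ^ 2 = 2 := Real.sq_sqrt (by norm_num)
  have h0 : Real.sqrt 2 ≠ 0 := by positivity
  have hp : (0:ℝ) < ρ^2 + 2 := by positivity
  have hq : 1 + (ρ / Real.sqrt 2)^2 = (ρ^2+2)/2 := by
    field_simp; nlinarith [h2]
  rw [hq]
  field_simp
  ring_nf
  simp only [h2]
  ring_nf
  rw [show Real.sqrt 2 ^ 4 = 4 by rw [show (4:ℕ) = 2*2 from rfl, pow_mul, h2]; norm_num]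
  ring

lemma cosA_eq (ρ : ℝ) : Real.cos (4 * Real.arctan (ρ / Real.sqrt 2))
    = 1 - 16*ρ^2/(ρ^2+2)^2 := by
  have h4 : 4 * Real.arctan (ρ / Real.sqrt 2) = 2 * (2 * Real.arctan (ρ / Real.sqrt 2)) := by ring
  rw [h4, Real.cos_two_mul', sin_two_arctan, cos_two_arctan]
  have h2 : Real.sqrt 2 ^ 2 = 2 := Real.sq_sqrt (by norm_num)
  have h0 : Real.sqrt 2 ≠ 0 := by positivity
  have hp : (0:ℝ) < ρ^2 + 2 := by positivity
  have hq : 1 + (ρ / Real.sqrt 2)^2 = (ρ^2+2)/2 := by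
    field_simp; nlinarith [h2]
  rw [hq]
  field_simp
  ring_nf
  simp only [h2]
  ring_nf
  rw [show Real.sqrt 2 ^ 4 = 4 by rw [show (4:ℕ) = 2*2 from rfl, pow_mul, h2]; norm_num]
  ring

def Sf (s : ℝ) : ℝ := 4*Real.sqrt 2*(2-s^2)/(s^2+2)^2
def cf (s : ℝ) : ℝ := 1 - 16*s^2/(s^2+2)^2
def dSf (s : ℝ) : ℝ := 4*Real.sqrt 2*s*(2*s^2-12)/(s^2+2)^3
def dcf (s : ℝ) : ℝ := (32*s^3-64*s)/(s^2+2)^3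
def P (s x : ℝ) : ℝ := (Real.cos (2*s*x) - 1)/s^2
def Q (s x : ℝ) : ℝ := (Real.sin (2*s*x) - 2*s*x)/s^3
def dP (s x : ℝ) : ℝ := -((2*s*x)*Real.sin (2*s*x) + 2*Real.cos (2*s*x) - 2)/s^3
def dQ (s x : ℝ) : ℝ := ((2*s*x)*(Real.cos (2*s*x) - 1) - 3*(Real.sin (2*s*x) - 2*s*x))/s^4
def Px (s x : ℝ) : ℝ := -(2*Real.sin (2*s*x))/s
def Qx (s x : ℝ) : ℝ := 2*(Real.cos (2*s*x) - 1)/s^2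
def dPx (s x : ℝ) : ℝ := -(2*((2*s*x)*Real.cos (2*s*x) - Real.sin (2*s*x)))/s^2
def dQx (s x : ℝ) : ℝ := 2*(2 - 2*Real.cos (2*s*x) - (2*s*x)*Real.sin (2*s*x))/s^3
def F (s x : ℝ) : ℝ := -(3/2) * (Sf s * P s x + cf s * Q s x)
def D1 (s x : ℝ) : ℝ := -(3/2) * (Sf s * Px s x + cf s * Qx s x)
def D2 (s x : ℝ) : ℝ :=
  -(3/2) * (Sf s * (-4*Real.cos (2*s*x)) + cf s * (-(4*Real.sin (2*s*x))/s))
def DF (s x : ℝ) : ℝ :=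
  -(3/2) * (dSf s * P s x + Sf s * dP s x + dcf s * Q s x + cf s * dQ s x)
def dDF (s x : ℝ) : ℝ :=
  -(3/2) * (dSf s * Px s x + Sf s * dPx s x + dcf s * Qx s x + cf s * dQx s x)

lemma nlin_eq (ρ x : ℝ) (hρ : ρ ≠ 0) : nlin ρ x = F ρ x := by
  unfold nlin F Sf cf P Q
  rw [Real.sin_add, sinA_eq, cosA_eq]
  have hp : (0:ℝ) < ρ^2 + 2 := by positivity
  field_simp
  ring

/-! ### Derivative computations -/

lemma hlin (c x : ℝ) : HasDerivAt (fun y : ℝ => c*y) c x := by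
  simpa using (hasDerivAt_id x).const_mul c

lemma hcos (ρ x : ℝ) : HasDerivAt (fun y => Real.cos (2*ρ*y)) (-Real.sin (2*ρ*x)*(2*ρ)) x := by
  have h1 : HasDerivAt (fun y : ℝ => 2*ρ*y) (2*ρ) x := by
    simpa [mul_assoc] using hlin (2*ρ) x
  exact (Real.hasDerivAt_cos _).comp x h1

lemma hsin (ρ x : ℝ) : HasDerivAt (fun y => Real.sin (2*ρ*y)) (Real.cos (2*ρ*x)*(2*ρ)) x := by
  have h1 : HasDerivAt (fun y : ℝ => 2*ρ*y) (2*ρ) x := by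
    simpa [mul_assoc] using hlin (2*ρ) x
  exact (Real.hasDerivAt_sin _).comp x h1

lemma hP_x (ρ x : ℝ) (hρ : ρ ≠ 0) : HasDerivAt (fun y => P ρ y) (Px ρ x) x := by
  have := ((hcos ρ x).sub_const 1).div_const (ρ^2)
  refine this.congr_deriv ?_
  unfold Px; field_simp

lemma hQ_x (ρ x : ℝ) (hρ : ρ ≠ 0) : HasDerivAt (fun y => Q ρ y) (Qx ρ x) x := by
  have h1 : HasDerivAt (fun y : ℝ => 2*ρ*y) (2*ρ) x := by
    simpa [mul_assoc] using hlin (2*ρ) x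
  have := ((hsin ρ x).sub h1).div_const (ρ^3)
  refine this.congr_deriv ?_
  unfold Qx; field_simp

lemma hPx_x (ρ x : ℝ) (hρ : ρ ≠ 0) :
    HasDerivAt (fun y => Px ρ y) (-4*Real.cos (2*ρ*x)) x := by
  have := ((hsin ρ x).const_mul 2).neg.div_const ρ
  refine this.congr_deriv ?_
  field_simp; ring

lemma hQx_x (ρ x : ℝ) (hρ : ρ ≠ 0) :
    HasDerivAt (fun y => Qx ρ y) (-(4*Real.sin (2*ρ*x))/ρ) x := by
  have := (((hcos ρ x).sub_const 1).const_mul 2).div_const (ρ^2)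
  refine this.congr_deriv ?_
  field_simp; ring

lemma hdP_x (ρ x : ℝ) (hρ : ρ ≠ 0) : HasDerivAt (fun y => dP ρ y) (dPx ρ x) x := by
  have h1 : HasDerivAt (fun y : ℝ => 2*ρ*y) (2*ρ) x := by
    simpa [mul_assoc] using hlin (2*ρ) x
  have hprod : HasDerivAt (fun y : ℝ => (2*ρ*y)*Real.sin (2*ρ*y))
      ((2*ρ)*Real.sin (2*ρ*x) + (2*ρ*x)*(Real.cos (2*ρ*x)*(2*ρ))) x := h1.mul (hsin ρ x)
  have := ((hprod.add ((hcos ρ x).const_mul 2)).sub_const 2).neg.div_const (ρ^3)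
  refine this.congr_deriv ?_
  unfold dPx; field_simp; ring

lemma hdQ_x (ρ x : ℝ) (hρ : ρ ≠ 0) : HasDerivAt (fun y => dQ ρ y) (dQx ρ x) x := by
  have h1 : HasDerivAt (fun y : ℝ => 2*ρ*y) (2*ρ) x := by
    simpa [mul_assoc] using hlin (2*ρ) x
  have hprod : HasDerivAt (fun y : ℝ => (2*ρ*y)*(Real.cos (2*ρ*y) - 1))
      ((2*ρ)*(Real.cos (2*ρ*x) - 1) + (2*ρ*x)*(-Real.sin (2*ρ*x)*(2*ρ))) x :=
    h1.mul ((hcos ρ x).sub_const 1)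
  have := (hprod.sub (((hsin ρ x).sub h1).const_mul 3)).div_const (ρ^4)
  refine this.congr_deriv ?_
  unfold dQx; field_simp; ring

lemma hSf_s (s : ℝ) : HasDerivAt Sf (dSf s) s := by
  have hnum : HasDerivAt (fun s : ℝ => 4*Real.sqrt 2*(2-s^2)) (4*Real.sqrt 2*(-(2*s))) s := by
    have := ((hasDerivAt_pow 2 s).const_sub 2).const_mul (4*Real.sqrt 2)
    refine this.congr_deriv ?_; push_cast; ring
  have hden : HasDerivAt (fun s : ℝ => (s^2+2)^2) (2*(s^2+2)^1*(2*s)) s := by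
    have h1 : HasDerivAt (fun s : ℝ => s^2+2) (2*s) s := by
      simpa using (hasDerivAt_pow 2 s).add_const 2
    exact (h1.pow 2).congr_deriv (by norm_num)
  have hd : (s^2+2)^2 ≠ 0 := by positivity
  have := hnum.div hden hd
  refine this.congr_deriv ?_
  unfold dSf
  have hp : (0:ℝ) < s^2+2 := by positivity
  field_simp
  ring

lemma hcf_s (s : ℝ) : HasDerivAt cf (dcf s) s := by
  have hnum : HasDerivAt (fun s : ℝ => 16*s^2) (16*(2*s)) s := by
    simpa using (hasDerivAt_pow 2 s).const_mul 16
  have hden : HasDerivAt (fun s : ℝ => (s^2+2)^2) (2*(s^2+2)^1*(2*s)) s := by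
    have h1 : HasDerivAt (fun s : ℝ => s^2+2) (2*s) s := by
      simpa using (hasDerivAt_pow 2 s).add_const 2
    exact (h1.pow 2).congr_deriv (by norm_num)
  have hd : (s^2+2)^2 ≠ 0 := by positivity
  have := (hnum.div hden hd).const_sub 1
  refine this.congr_deriv ?_
  unfold dcf
  have hp : (0:ℝ) < s^2+2 := by positivity
  field_simp
  ring

lemma hP_s (x s : ℝ) (hs : s ≠ 0) : HasDerivAt (fun s => P s x) (dP s x) s := by
  have h1 : HasDerivAt (fun s : ℝ => 2*s*x) (2*x) s := by
    have : HasDerivAt (fun s : ℝ => (2*x)*s) (2*x) s := hlin (2*x) s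
    exact this.congr_of_eventuallyEq (by filter_upwards with t; ring)
  have hcoss : HasDerivAt (fun s : ℝ => Real.cos (2*s*x)) (-Real.sin (2*s*x)*(2*x)) s :=
    (Real.hasDerivAt_cos _).comp s h1
  have hnum : HasDerivAt (fun s : ℝ => Real.cos (2*s*x) - 1) (-Real.sin (2*s*x)*(2*x)) s :=
    hcoss.sub_const 1
  have hden : HasDerivAt (fun s : ℝ => s^2) (2*s) s := by simpa using hasDerivAt_pow 2 s
  have := hnum.div hden (pow_ne_zero 2 hs)
  refine this.congr_deriv ?_
  unfold dP
  field_simp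
  ring

lemma hQ_s (x s : ℝ) (hs : s ≠ 0) : HasDerivAt (fun s => Q s x) (dQ s x) s := by
  have h1 : HasDerivAt (fun s : ℝ => 2*s*x) (2*x) s := by
    have : HasDerivAt (fun s : ℝ => (2*x)*s) (2*x) s := hlin (2*x) s
    exact this.congr_of_eventuallyEq (by filter_upwards with t; ring)
  have hsins : HasDerivAt (fun s : ℝ => Real.sin (2*s*x)) (Real.cos (2*s*x)*(2*x)) s :=
    (Real.hasDerivAt_sin _).comp s h1
  have hnum := hsins.sub h1
  have hden : HasDerivAt (fun s : ℝ => s^3) (3*s^2) s := by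
    have := hasDerivAt_pow 3 s; norm_num at this; simpa using this
  have := hnum.div hden (pow_ne_zero 3 hs)
  refine this.congr_deriv ?_
  unfold dQ
  field_simp
  simp only [Pi.sub_apply]
  ring

lemma deriv_x (ρ x : ℝ) (hρ : ρ ≠ 0) : deriv (fun y => nlin ρ y) x = D1 ρ x := by
  have he : (fun y => nlin ρ y) = fun y => F ρ y := funext fun y => nlin_eq ρ y hρ
  rw [he]
  exact ((((hP_x ρ x hρ).const_mul (Sf ρ)).add
    ((hQ_x ρ x hρ).const_mul (cf ρ))).const_mul (-(3/2))).deriv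

lemma deriv2_x (ρ x : ℝ) (hρ : ρ ≠ 0) :
    iteratedDeriv 2 (fun y => nlin ρ y) x = D2 ρ x := by
  rw [show (2:ℕ) = 1 + 1 from rfl, iteratedDeriv_succ, iteratedDeriv_one]
  have he : deriv (fun y => nlin ρ y) = fun y => D1 ρ y := funext fun y => deriv_x ρ y hρ
  rw [he]
  exact ((((hPx_x ρ x hρ).const_mul (Sf ρ)).add
    ((hQx_x ρ x hρ).const_mul (cf ρ))).const_mul (-(3/2))).deriv

lemma hF_s (x ρ : ℝ) (hρ : ρ ≠ 0) : HasDerivAt (fun s => F s x) (DF ρ x) ρ := by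
  have h1 := (hSf_s ρ).mul (hP_s x ρ hρ)
  have h2 := (hcf_s ρ).mul (hQ_s x ρ hρ)
  have := (h1.add h2).const_mul (-(3/2 : ℝ))
  refine this.congr_deriv ?_
  unfold DF
  ring

lemma deriv_s (ρ x : ℝ) (hρ : 0 < ρ) : deriv (fun s => nlin s x) ρ = DF ρ x := by
  have hev : (fun s => nlin s x) =ᶠ[nhds ρ] (fun s => F s x) := by
    filter_upwards [eventually_ne_nhds hρ.ne'] with s hs
    exact nlin_eq s x hs
  rw [hev.deriv_eq]
  exact (hF_s x ρ hρ.ne').deriv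

lemma deriv_xs (ρ x : ℝ) (hρ : 0 < ρ) :
    deriv (fun y => deriv (fun s => nlin s y) ρ) x = dDF ρ x := by
  have he : (fun y => deriv (fun s => nlin s y) ρ) = fun y => DF ρ y :=
    funext fun y => deriv_s ρ y hρ
  rw [he]
  have hρ' := hρ.ne'
  have h1 := (hP_x ρ x hρ').const_mul (dSf ρ)
  have h2 := (hdP_x ρ x hρ').const_mul (Sf ρ)
  have h3 := (hQ_x ρ x hρ').const_mul (dcf ρ)
  have h4 := (hdQ_x ρ x hρ').const_mul (cf ρ)
  exact ((((h1.add h2).add h3).add h4).const_mul (-(3/2))).deriv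

/-! ### Bounds on the components -/

lemma sqrt2_le : Real.sqrt 2 ≤ 3/2 := by
  nlinarith [Real.sq_sqrt (by norm_num : (2:ℝ) ≥ 0), Real.sqrt_nonneg 2]

section Bounds

variable {ρ x : ℝ} (h0 : 0 < ρ) (h1 : ρ < 1)
include h0 h1

lemma bSf : |Sf ρ| ≤ 3 := by
  have hs2 := sqrt2_le
  have hsn := Real.sqrt_nonneg 2
  have hp : (0:ℝ) < (ρ^2+2)^2 := by positivity
  rw [Sf, abs_div, abs_of_pos hp, div_le_iff₀ hp, abs_le]
  constructor <;> nlinarith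

lemma bcf : |cf ρ| ≤ 1 := by
  have hp : (0:ℝ) < (ρ^2+2)^2 := by positivity
  have hq1 : 0 ≤ 16*ρ^2/(ρ^2+2)^2 := by positivity
  have hq2 : 16*ρ^2/(ρ^2+2)^2 ≤ 2 := by
    rw [div_le_iff₀ hp]; nlinarith
  rw [cf, abs_le]
  constructor <;> linarith

lemma bdSf : |dSf ρ| ≤ 9 := by
  have hs2 := sqrt2_le
  have hsn := Real.sqrt_nonneg 2
  have hp : (0:ℝ) < (ρ^2+2)^3 := by positivity
  have h8 : (8:ℝ) ≤ (ρ^2+2)^3 := by nlinarith [sq_nonneg ρ, sq_nonneg (ρ^2), sq_nonneg (ρ^3)]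
  have haρ : Real.sqrt 2 * ρ ≤ 3/2 := by
    nlinarith [mul_nonneg hsn (sub_nonneg.2 h1.le)]
  have hcube : 0 ≤ Real.sqrt 2 * ρ^3 := by positivity
  rw [dSf, abs_div, abs_of_pos hp, div_le_iff₀ hp, abs_le]
  constructor <;> nlinarith

lemma bdcf : |dcf ρ| ≤ 8 := by
  have hp : (0:ℝ) < (ρ^2+2)^3 := by positivity
  rw [dcf, abs_div, abs_of_pos hp, div_le_iff₀ hp, abs_le]
  constructor <;> nlinarith

lemma habs2ρx : |2*ρ*x| = 2*ρ*|x| := by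
  rw [abs_mul, abs_mul]
  rw [abs_of_pos h0]
  norm_num

lemma bP : |P ρ x| ≤ 2*x^2 := by
  have hp : (0:ℝ) < ρ^2 := by positivity
  rw [P, abs_div, abs_of_pos hp, div_le_iff₀ hp]
  calc |Real.cos (2*ρ*x) - 1| ≤ (2*ρ*x)^2/2 := abs_cos_sub_one _
  _ = 2*x^2*ρ^2 := by ring

lemma bQ : |Q ρ x| ≤ (4/3)*|x|^3 := by
  have hp : (0:ℝ) < ρ^3 := by positivity
  rw [Q, abs_div, abs_of_pos hp, div_le_iff₀ hp]
  calc |Real.sin (2*ρ*x) - 2*ρ*x| ≤ |2*ρ*x|^3/6 := abs_sin_sub_le _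
  _ = (2*ρ*|x|)^3/6 := by rw [habs2ρx h0 h1]
  _ = (4/3)*|x|^3*ρ^3 := by ring

lemma bPx : |Px ρ x| ≤ 4*|x| := by
  rw [Px, abs_div, abs_of_pos h0, div_le_iff₀ h0, abs_neg, abs_mul]
  calc |2| * |Real.sin (2*ρ*x)| ≤ 2 * |2*ρ*x| := by
        rw [abs_two]; have h := Real.abs_sin_le_abs (x := 2*ρ*x); linarith
  _ = 2*(2*ρ*|x|) := by rw [habs2ρx h0 h1]
  _ = 4*|x| *ρ := by ring

lemma bQx : |Qx ρ x| ≤ 4*x^2 := by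
  have hp : (0:ℝ) < ρ^2 := by positivity
  rw [Qx, abs_div, abs_of_pos hp, div_le_iff₀ hp, abs_mul, abs_two]
  calc 2 * |Real.cos (2*ρ*x) - 1| ≤ 2 * ((2*ρ*x)^2/2) := by gcongr; exact abs_cos_sub_one _
  _ = 4*x^2*ρ^2 := by ring

lemma bdP : |dP ρ x| ≤ 4*x^4 := by
  have hp : (0:ℝ) < ρ^3 := by positivity
  rw [dP, abs_div, abs_of_pos hp, div_le_iff₀ hp, abs_neg]
  calc |(2*ρ*x)*Real.sin (2*ρ*x) + 2*Real.cos (2*ρ*x) - 2| ≤ (2*ρ*x)^4/4 := key1 _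
  _ = 4*ρ^4*x^4 := by ring
  _ ≤ 4*x^4*ρ^3 := by
      have hx4n : (0:ℝ) ≤ x^4 := by positivity
      nlinarith [mul_nonneg (mul_nonneg hx4n (pow_nonneg h0.le 3)) (sub_nonneg.2 h1.le)]

lemma bdQ : |dQ ρ x| ≤ 8*x^4 := by
  have hp : (0:ℝ) < ρ^4 := by positivity
  have hx4 : |x|^4 = x^4 := by rw [show (4:ℕ) = 2*2 from rfl, pow_mul, pow_mul, sq_abs]
  have hxn := abs_nonneg x
  have han : 0 ≤ ρ* |x| := mul_nonneg h0.le hxn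
  rw [dQ, abs_div, abs_of_pos hp, div_le_iff₀ hp]
  have egoal : 8*x^4*ρ^4 = 8*(ρ* |x| )^4 := by rw [← hx4]; ring
  rw [egoal]
  rcases le_or_gt (ρ* |x| ) 1 with hc | hc
  · calc |(2*ρ*x)*(Real.cos (2*ρ*x) - 1) - 3*(Real.sin (2*ρ*x) - 2*ρ*x)|
        ≤ |2*ρ*x|^5/15 := key2 _
    _ = (32/15)*(ρ* |x| )^5 := by rw [habs2ρx h0 h1]; ring
    _ ≤ 8*(ρ* |x| )^4 := by nlinarith [pow_nonneg han 4, pow_nonneg han 3, sq_nonneg (ρ* |x| )]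
  · have hx1 : 1 ≤ ρ* |x|  := hc.le
    have t1 : |Real.cos (2*ρ*x) - 1| ≤ 2 := by
      calc |Real.cos (2*ρ*x) - 1| ≤ |Real.cos (2*ρ*x)| + |(1:ℝ)| := abs_sub _ _
      _ ≤ 2 := by rw [abs_one]; nlinarith [Real.abs_cos_le_one (2*ρ*x)]
    calc |(2*ρ*x)*(Real.cos (2*ρ*x) - 1) - 3*(Real.sin (2*ρ*x) - 2*ρ*x)|
        ≤ |(2*ρ*x)*(Real.cos (2*ρ*x) - 1)| + |3*(Real.sin (2*ρ*x) - 2*ρ*x)| := abs_sub _ _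
    _ = |2*ρ*x| * |Real.cos (2*ρ*x) - 1| + 3* |Real.sin (2*ρ*x) - 2*ρ*x|  := by
        rw [abs_mul (2*ρ*x) (Real.cos (2*ρ*x) - 1), abs_mul (3:ℝ) (Real.sin (2*ρ*x) - 2*ρ*x)]
        norm_num
    _ ≤ |2*ρ*x| * 2 + 3*(|2*ρ*x|^3/6) := by
        refine add_le_add (mul_le_mul_of_nonneg_left t1 (abs_nonneg _)) ?_
        have := abs_sin_sub_le (2*ρ*x)
        linarith
    _ = 4*(ρ* |x| ) + 4*(ρ* |x| )^3 := by rw [habs2ρx h0 h1]; ring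
    _ ≤ 8*(ρ* |x| )^4 := by nlinarith [sq_nonneg (ρ* |x| ), sq_nonneg (ρ* |x| -1), pow_nonneg han 3, pow_nonneg han 4]

lemma bdPx : |dPx ρ x| ≤ 11* |x| ^3 := by
  have hp : (0:ℝ) < ρ^2 := by positivity
  rw [dPx, abs_div, abs_of_pos hp, div_le_iff₀ hp, abs_neg, abs_mul]
  have hxn3 : (0:ℝ) ≤ |x|^3 := by positivity
  calc |(2:ℝ)| * |(2*ρ*x)*Real.cos (2*ρ*x) - Real.sin (2*ρ*x)|
      = 2 * |(2*ρ*x)*Real.cos (2*ρ*x) - Real.sin (2*ρ*x)| := by rw [abs_two]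
  _ ≤ 2 * (2* |2*ρ*x| ^3/3) := mul_le_mul_of_nonneg_left (key3 _) (by norm_num)
  _ = (32/3)*ρ*(ρ^2* |x| ^3) := by rw [habs2ρx h0 h1]; ring
  _ ≤ 11* |x| ^3*ρ^2 := by
      nlinarith [mul_nonneg (mul_nonneg (pow_nonneg h0.le 2) hxn3) (sub_nonneg.2 h1.le),
        mul_nonneg (pow_nonneg h0.le 2) hxn3]

lemma bdQx : |dQx ρ x| ≤ 16* |x| ^3 := by
  have hp : (0:ℝ) < ρ^3 := by positivity
  have hxn := abs_nonneg x
  have han : 0 ≤ ρ* |x|  := mul_nonneg h0.le hxn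
  rw [dQx, abs_div, abs_of_pos hp, div_le_iff₀ hp, abs_mul]
  have egoal : 16* |x| ^3*ρ^3 = 16*(ρ* |x| )^3 := by ring
  rw [egoal]
  have ekey : |2 - 2*Real.cos (2*ρ*x) - (2*ρ*x)*Real.sin (2*ρ*x)|
      = |(2*ρ*x)*Real.sin (2*ρ*x) + 2*Real.cos (2*ρ*x) - 2| := by
    rw [← abs_neg]; congr 1; ring
  rcases le_or_gt (ρ* |x| ) 1 with hc | hc
  · calc |(2:ℝ)| * |2 - 2*Real.cos (2*ρ*x) - (2*ρ*x)*Real.sin (2*ρ*x)|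
        = 2 * |(2*ρ*x)*Real.sin (2*ρ*x) + 2*Real.cos (2*ρ*x) - 2| := by rw [abs_two, ekey]
    _ ≤ 2 * ((2*ρ*x)^4/4) := mul_le_mul_of_nonneg_left (key1 _) (by norm_num)
    _ = 8*(ρ* |x| )^4 := by
        rw [show (2*ρ*x)^4 = (2*ρ* |x| )^4 by
          rw [show (4:ℕ) = 2*2 from rfl, pow_mul, pow_mul]
          congr 1
          rw [mul_pow, mul_pow, mul_pow, mul_pow, sq_abs]]
        ring
    _ ≤ 8*(ρ* |x| )^3 := by nlinarith [pow_nonneg han 3]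
    _ ≤ 16*(ρ* |x| )^3 := by nlinarith [pow_nonneg han 3]
  · have hx1 : 1 ≤ ρ* |x|  := hc.le
    have t1 : |2 - 2*Real.cos (2*ρ*x)| ≤ 4 := by
      calc |2 - 2*Real.cos (2*ρ*x)| ≤ |(2:ℝ)| + |2*Real.cos (2*ρ*x)| := abs_sub _ _
      _ = 2 + 2* |Real.cos (2*ρ*x)|  := by rw [abs_two, abs_mul, abs_two]
      _ ≤ 4 := by nlinarith [Real.abs_cos_le_one (2*ρ*x)]
    have t2 : |(2*ρ*x)*Real.sin (2*ρ*x)| ≤ 4*(ρ* |x| )^2 := by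
      rw [abs_mul]
      calc |2*ρ*x| * |Real.sin (2*ρ*x)| ≤ |2*ρ*x| * |2*ρ*x| :=
            mul_le_mul_of_nonneg_left (Real.abs_sin_le_abs (x := 2*ρ*x)) (abs_nonneg _)
      _ = 4*(ρ* |x| )^2 := by rw [habs2ρx h0 h1]; ring
    calc |(2:ℝ)| * |2 - 2*Real.cos (2*ρ*x) - (2*ρ*x)*Real.sin (2*ρ*x)|
        = 2 * |2 - 2*Real.cos (2*ρ*x) - (2*ρ*x)*Real.sin (2*ρ*x)| := by rw [abs_two]
    _ ≤ 2 * (|2 - 2*Real.cos (2*ρ*x)| + |(2*ρ*x)*Real.sin (2*ρ*x)|) :=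
        mul_le_mul_of_nonneg_left (abs_sub _ _) (by norm_num)
    _ ≤ 2 * (4 + 4*(ρ* |x| )^2) := by nlinarith
    _ ≤ 16*(ρ* |x| )^3 := by nlinarith [sq_nonneg (ρ* |x| -1), sq_nonneg (ρ* |x| ), pow_nonneg han 3]

end Bounds

lemma abs_pair {a b A B : ℝ} (ha : |a| ≤ A) (hb : |b| ≤ B) : |a*b| ≤ A*B := by
  rw [abs_mul]
  exact mul_le_mul ha hb (abs_nonneg b) ((abs_nonneg a).trans ha)

lemma abs_comb2 {a₁ b₁ a₂ b₂ A₁ B₁ A₂ B₂ : ℝ}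
    (h₁ : |a₁| ≤ A₁) (h₂ : |b₁| ≤ B₁) (h₃ : |a₂| ≤ A₂) (h₄ : |b₂| ≤ B₂) :
    |(-(3/2):ℝ) * (a₁*b₁ + a₂*b₂)| ≤ (3/2)*(A₁*B₁ + A₂*B₂) := by
  rw [abs_mul, show |(-(3/2):ℝ)| = 3/2 by norm_num]
  gcongr
  calc |a₁*b₁ + a₂*b₂| ≤ |a₁*b₁| + |a₂*b₂| := abs_add_le _ _
  _ ≤ A₁*B₁ + A₂*B₂ := add_le_add (abs_pair h₁ h₂) (abs_pair h₃ h₄)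

lemma abs_comb4 {a₁ b₁ a₂ b₂ a₃ b₃ a₄ b₄ A₁ B₁ A₂ B₂ A₃ B₃ A₄ B₄ : ℝ}
    (h₁ : |a₁| ≤ A₁) (h₂ : |b₁| ≤ B₁) (h₃ : |a₂| ≤ A₂) (h₄ : |b₂| ≤ B₂)
    (h₅ : |a₃| ≤ A₃) (h₆ : |b₃| ≤ B₃) (h₇ : |a₄| ≤ A₄) (h₈ : |b₄| ≤ B₄) :
    |(-(3/2):ℝ) * (a₁*b₁ + a₂*b₂ + a₃*b₃ + a₄*b₄)|
      ≤ (3/2)*(A₁*B₁ + A₂*B₂ + A₃*B₃ + A₄*B₄) := by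
  rw [abs_mul, show |(-(3/2):ℝ)| = 3/2 by norm_num]
  gcongr
  calc |a₁*b₁ + a₂*b₂ + a₃*b₃ + a₄*b₄|
      ≤ |a₁*b₁ + a₂*b₂ + a₃*b₃| + |a₄*b₄| := abs_add_le _ _
  _ ≤ (|a₁*b₁ + a₂*b₂| + |a₃*b₃|) + |a₄*b₄| := by gcongr; exact abs_add_le _ _
  _ ≤ ((|a₁*b₁| + |a₂*b₂|) + |a₃*b₃|) + |a₄*b₄| := by gcongr; exact abs_add_le _ _
  _ ≤ A₁*B₁ + A₂*B₂ + A₃*B₃ + A₄*B₄ := by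
      have := abs_pair h₁ h₂
      have := abs_pair h₃ h₄
      have := abs_pair h₅ h₆
      have := abs_pair h₇ h₈
      linarith

end NLaux

open NLaux in
/-- Pointwise bounds on the linearized nonlinearity `n` and its first and
second partial derivatives, uniformly for `ρ ∈ (0,1)` and `x ∈ ℝ`. -/
theorem nonlinearity_pointwise_bounds :
    ∃ C > (0:ℝ), ∀ ρ ∈ Set.Ioo (0:ℝ) 1, ∀ x : ℝ,
      |nlin ρ x| ≤ C * (x ^ 2 + |x| ^ 3)
      ∧ |deriv (fun y => nlin ρ y) x| ≤ C * (|x| + x ^ 2)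
      ∧ |deriv (fun s => nlin s x) ρ| ≤ C * (x ^ 2 + x ^ 4)
      ∧ |deriv (fun y => deriv (fun s => nlin s y) ρ) x| ≤ C * (|x| + |x| ^ 3)
      ∧ |iteratedDeriv 2 (fun y => nlin ρ y) x| ≤ C * (1 + |x|) := by
  refine ⟨100, by norm_num, ?_⟩
  rintro ρ ⟨h0, h1⟩ x
  have hρ := h0.ne'
  have hx2 : |x|^2 = x^2 := sq_abs x
  have hx4 : |x|^4 = x^4 := by rw [show (4:ℕ) = 2*2 from rfl, pow_mul, pow_mul, sq_abs]
  have hxn := abs_nonneg x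
  have bs := bSf h0 h1
  have bc := bcf h0 h1
  have bds := bdSf h0 h1
  have bdc := bdcf h0 h1
  have bp := bP h0 h1 (x := x)
  have bq := bQ h0 h1 (x := x)
  have bpx := bPx h0 h1 (x := x)
  have bqx := bQx h0 h1 (x := x)
  have bdp := bdP h0 h1 (x := x)
  have bdq := bdQ h0 h1 (x := x)
  have bdpx := bdPx h0 h1 (x := x)
  have bdqx := bdQx h0 h1 (x := x)
  refine ⟨?_, ?_, ?_, ?_, ?_⟩
  · rw [nlin_eq ρ x hρ, F]
    calc |(-(3/2):ℝ) * (Sf ρ * P ρ x + cf ρ * Q ρ x)|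
        ≤ (3/2)*(3*(2*x^2) + 1*((4/3)*|x|^3)) := abs_comb2 bs bp bc bq
    _ ≤ 100 * (x^2 + |x|^3) := by nlinarith [sq_nonneg x, pow_nonneg hxn 3]
  · rw [deriv_x ρ x hρ, D1]
    calc |(-(3/2):ℝ) * (Sf ρ * Px ρ x + cf ρ * Qx ρ x)|
        ≤ (3/2)*(3*(4*|x|) + 1*(4*x^2)) := abs_comb2 bs bpx bc bqx
    _ ≤ 100 * (|x| + x^2) := by nlinarith [sq_nonneg x]
  · rw [deriv_s ρ x h0, DF]
    calc |(-(3/2):ℝ) * (dSf ρ * P ρ x + Sf ρ * dP ρ x + dcf ρ * Q ρ x + cf ρ * dQ ρ x)|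
        ≤ (3/2)*(9*(2*x^2) + 3*(4*x^4) + 8*((4/3)*|x|^3) + 1*(8*x^4)) :=
          abs_comb4 bds bp bs bdp bdc bq bc bdq
    _ ≤ 100 * (x^2 + x^4) := by nlinarith [sq_nonneg (x^2 - |x|), sq_nonneg x, hx2, hx4]
  · rw [deriv_xs ρ x h0, dDF]
    calc |(-(3/2):ℝ) * (dSf ρ * Px ρ x + Sf ρ * dPx ρ x + dcf ρ * Qx ρ x + cf ρ * dQx ρ x)|
        ≤ (3/2)*(9*(4*|x|) + 3*(11*|x|^3) + 8*(4*x^2) + 1*(16*|x|^3)) :=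
          abs_comb4 bds bpx bs bdpx bdc bqx bc bdqx
    _ ≤ 100 * (|x| + |x|^3) := by nlinarith [sq_nonneg (|x| - 1), hx2, pow_nonneg hxn 3, hxn, sq_nonneg (x^2 - |x|)]
  · rw [deriv2_x ρ x hρ, D2]
    have bcos : |(-4:ℝ)*Real.cos (2*ρ*x)| ≤ 4 := by
      rw [abs_mul, show |(-4:ℝ)| = 4 by norm_num]
      nlinarith [Real.abs_cos_le_one (2*ρ*x)]
    have bsin : |(-(4*Real.sin (2*ρ*x)))/ρ| ≤ 8*|x| := by
      rw [abs_div, abs_of_pos h0, div_le_iff₀ h0, abs_neg, abs_mul,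
        show |(4:ℝ)| = 4 by norm_num]
      calc 4 * |Real.sin (2*ρ*x)| ≤ 4 * |2*ρ*x| := by
            have h := Real.abs_sin_le_abs (x := 2*ρ*x); linarith
      _ = 4*(2*ρ*|x|) := by rw [habs2ρx h0 h1]
      _ = 8*|x| *ρ := by ring
    calc |(-(3/2):ℝ) * (Sf ρ * ((-4)*Real.cos (2*ρ*x)) + cf ρ * ((-(4*Real.sin (2*ρ*x)))/ρ))|
        ≤ (3/2)*(3*4 + 1*(8*|x|)) := abs_comb2 bs bcos bc bsin
    _ ≤ 100 * (1 + |x|) := by nlinarith
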